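/- Corollary 1 (Alignment without the saturation-period condition). In the setting of the saturated heading control law θ̇(t) = Sat_a^b(θ̇_d(t) − k_θ ĥ(t)ᵀEχ̂_p(t)), suppose there exists a constant d with 0 < d < min{−a, b} such that |θ̇_d(t)| ≤ d for all t ≥ 0, and let k̄_θ := min{−a − d, b − d} > 0. If the gain satisfies k_θ ∈ (0, k̄_θ) and σ(0) ≠ π, then the saturation never activates — i.e., a < θ̇_d(t) − k_θ ĥ(t)ᵀEχ̂_p(t) < b for all t ≥ 0 — and the angle difference σ(t) converges to 0 as t → ∞, without requiring any condition on σ during saturation periods. -/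

import Mathlib

open Filter Topology Real

/-- saturation function `Sat_a^b(x) = min(max(x,a),b)` -/
noncomputable def sat (a b x : ℝ) : ℝ := min (max x a) b

/-- **Corollary 1 (Alignment without the saturation-period condition).**
In the setting of the saturated heading control law, if `|θd(t)| ≤ d` with
`0 < d < min{-a, b}` and the gain satisfies `k_θ ∈ (0, min{-a - d, b - d})` and
`σ(0) ≠ π`, then saturation never activates, i.e.
`a < θd(t) - k_θ ĥᵀEχ̂_p(t) < b` for all `t ≥ 0`, and `σ(t) → 0`. -/
theorem heading_alignment_no_saturation
    (χ₁ χ₂ : ℝ → ℝ) (hχ₁ : ContDiff ℝ 1 χ₁) (hχ₂ : ContDiff ℝ 1 χ₂)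
    (hnz : ∀ t : ℝ, 0 ≤ t → 0 < χ₁ t ^ 2 + χ₂ t ^ 2)
    (θ σ : ℝ → ℝ)
    (kθ a b : ℝ) (ha : a < 0) (hb : 0 < b)
    (nrm s θd : ℝ → ℝ)
    (hnrm : ∀ t, nrm t = Real.sqrt (χ₁ t ^ 2 + χ₂ t ^ 2))
    -- `s(t) = ĥ(t)ᵀ E χ̂_p(t)`
    (hs : ∀ t, s t = (Real.sin (θ t) * χ₁ t - Real.cos (θ t) * χ₂ t) / nrm t)
    -- `θd(t) = -χ̂_p(t)ᵀ E χ̇_p(t) / ‖χ_p(t)‖`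
    (hθd : ∀ t, θd t =
      -((χ₁ t / nrm t) * (-(deriv χ₂ t)) + (χ₂ t / nrm t) * deriv χ₁ t) / nrm t)
    -- `σ` is the signed angle in `(-π, π]` directed from `χ̂_p` to `ĥ`
    (hσ : ∀ t : ℝ, 0 ≤ t → σ t ∈ Set.Ioc (-π) π ∧
      Real.sin (σ t) = s t ∧
      Real.cos (σ t) = (Real.cos (θ t) * χ₁ t + Real.sin (θ t) * χ₂ t) / nrm t)
    -- saturated angular control law
    (hctrl : ∀ t : ℝ, 0 ≤ t → HasDerivAt θ (sat a b (θd t - kθ * s t)) t)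
    -- bound on the change rate of the vector-field orientation
    (d : ℝ) (hd0 : 0 < d) (hd : d < min (-a) b)
    (hθdbd : ∀ t : ℝ, 0 ≤ t → |θd t| ≤ d)
    -- gain condition `k_θ ∈ (0, k̄_θ)` with `k̄_θ = min{-a - d, b - d}`
    (hkθ : 0 < kθ) (hkθ' : kθ < min (-a - d) (b - d))
    -- initial angle difference
    (hinit : σ 0 ≠ π) :
    (∀ t : ℝ, 0 ≤ t → a < θd t - kθ * s t ∧ θd t - kθ * s t < b) ∧
    Tendsto σ atTop (nhds 0) := by
  -- |s t| ≤ 1 for t ≥ 0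
  have hs1 : ∀ t : ℝ, 0 ≤ t → |s t| ≤ 1 := by
    intro t ht
    rw [← (hσ t ht).2.1]
    exact abs_le.2 ⟨Real.neg_one_le_sin _, Real.sin_le_one _⟩
  have hkθa : kθ < -a - d := lt_of_lt_of_le hkθ' (min_le_left _ _)
  have hkθb : kθ < b - d := lt_of_lt_of_le hkθ' (min_le_right _ _)
  -- saturation never activates
  have hbounds : ∀ t : ℝ, 0 ≤ t → a < θd t - kθ * s t ∧ θd t - kθ * s t < b := by
    intro t ht
    have h1 := abs_le.1 (hθdbd t ht)
    have h2 := abs_le.1 (hs1 t ht)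
    have h3 : kθ * s t ≤ kθ * 1 := by nlinarith [h2.2]
    have h4 : kθ * (-1) ≤ kθ * s t := by nlinarith [h2.1]
    constructor <;> nlinarith
  refine ⟨hbounds, ?_⟩
  -- unsaturated dynamics of θ
  have hθder : ∀ t : ℝ, 0 ≤ t → HasDerivAt θ (θd t - kθ * s t) t := by
    intro t ht
    have h := hctrl t ht
    have hb' := hbounds t ht
    simpa [sat, max_eq_left hb'.1.le, min_eq_left hb'.2.le] using h
  -- the cosine of the angle difference
  set c : ℝ → ℝ := fun t => Real.cos (θ t) * (χ₁ t / nrm t) + Real.sin (θ t) * (χ₂ t / nrm t)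
    with hc_def
  have hccos : ∀ t : ℝ, 0 ≤ t → Real.cos (σ t) = c t := by
    intro t ht
    rw [(hσ t ht).2.2, hc_def]; ring
  have hnpos : ∀ t : ℝ, 0 ≤ t → 0 < nrm t := by
    intro t ht; rw [hnrm t]; exact Real.sqrt_pos.2 (hnz t ht)
  have hn2 : ∀ t : ℝ, 0 ≤ t → nrm t ^ 2 = χ₁ t ^ 2 + χ₂ t ^ 2 := by
    intro t ht; rw [hnrm t]; exact Real.sq_sqrt (hnz t ht).le
  -- derivative of c
  have hderiv : ∀ t : ℝ, 0 ≤ t → HasDerivAt c (kθ * s t ^ 2) t := by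
    intro t ht
    have hn0 : nrm t ≠ 0 := (hnpos t ht).ne'
    have h1 : HasDerivAt χ₁ (deriv χ₁ t) t :=
      (hχ₁.differentiable one_ne_zero t).hasDerivAt
    have h2 : HasDerivAt χ₂ (deriv χ₂ t) t :=
      (hχ₂.differentiable one_ne_zero t).hasDerivAt
    have hsum : HasDerivAt (fun τ => χ₁ τ ^ 2 + χ₂ τ ^ 2)
        (2 * χ₁ t * deriv χ₁ t + 2 * χ₂ t * deriv χ₂ t) t := by
      have := (h1.pow 2).add (h2.pow 2)
      refine this.congr_deriv (Eq.symm ?_)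
      push_cast; ring
    have hnd : HasDerivAt nrm
        ((χ₁ t * deriv χ₁ t + χ₂ t * deriv χ₂ t) / nrm t) t := by
      have hnrm' : nrm = fun τ => Real.sqrt (χ₁ τ ^ 2 + χ₂ τ ^ 2) := funext hnrm
      rw [hnrm']
      have := hsum.sqrt (hnz t ht).ne'
      have hS : Real.sqrt (χ₁ t ^ 2 + χ₂ t ^ 2) ≠ 0 :=
        (Real.sqrt_pos.2 (hnz t ht)).ne'
      convert this using 1
      show (χ₁ t * deriv χ₁ t + χ₂ t * deriv χ₂ t) / Real.sqrt (χ₁ t ^ 2 + χ₂ t ^ 2) =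
        (2 * χ₁ t * deriv χ₁ t + 2 * χ₂ t * deriv χ₂ t) / (2 * Real.sqrt (χ₁ t ^ 2 + χ₂ t ^ 2))
      field_simp
    have hu1 : HasDerivAt (fun τ => χ₁ τ / nrm τ) (-θd t * (χ₂ t / nrm t)) t := by
      have := h1.div hnd hn0
      refine this.congr_deriv (Eq.symm ?_)
      rw [hθd t]
      field_simp
      linear_combination (-(deriv χ₁ t)) * hn2 t ht
    have hu2 : HasDerivAt (fun τ => χ₂ τ / nrm τ) (θd t * (χ₁ t / nrm t)) t := by
      have := h2.div hnd hn0
      refine this.congr_deriv (Eq.symm ?_)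
      rw [hθd t]
      field_simp
      linear_combination (-(deriv χ₂ t)) * hn2 t ht
    have hθ' := hθder t ht
    have hcos : HasDerivAt (fun τ => Real.cos (θ τ))
        (-Real.sin (θ t) * (θd t - kθ * s t)) t :=
      (Real.hasDerivAt_cos (θ t)).comp t hθ'
    have hsin : HasDerivAt (fun τ => Real.sin (θ τ))
        (Real.cos (θ t) * (θd t - kθ * s t)) t :=
      (Real.hasDerivAt_sin (θ t)).comp t hθ'
    have htot := (hcos.mul hu1).add (hsin.mul hu2)
    have hsu : s t = Real.sin (θ t) * (χ₁ t / nrm t) - Real.cos (θ t) * (χ₂ t / nrm t) := by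
      rw [hs t]; ring
    refine htot.congr_deriv (Eq.symm ?_)
    rw [hsu]; ring
  -- s² = 1 - c² on [0, ∞)
  have hsc : ∀ t : ℝ, 0 ≤ t → s t ^ 2 = 1 - c t ^ 2 := by
    intro t ht
    have := Real.sin_sq_add_cos_sq (σ t)
    rw [(hσ t ht).2.1, hccos t ht] at this
    linarith
  -- bounds on c
  have hcle1 : ∀ t : ℝ, 0 ≤ t → c t ≤ 1 := fun t ht =>
    (hccos t ht) ▸ Real.cos_le_one _
  have hcge : ∀ t : ℝ, 0 ≤ t → -1 ≤ c t := fun t ht =>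
    (hccos t ht) ▸ Real.neg_one_le_cos _
  -- c 0 > -1
  have hc0 : -1 < c 0 := by
    rw [← hccos 0 le_rfl]
    have hσ0 := (hσ 0 le_rfl).1
    have hσ0' : σ 0 < π := lt_of_le_of_ne hσ0.2 hinit
    have hpos : 0 < Real.cos (σ 0 / 2) := by
      apply Real.cos_pos_of_mem_Ioo
      constructor <;> [linarith [hσ0.1]; linarith]
    have hsq : Real.cos (σ 0 / 2) ^ 2 = 1 / 2 + Real.cos (2 * (σ 0 / 2)) / 2 :=
      Real.cos_sq _
    rw [show 2 * (σ 0 / 2) = σ 0 by ring] at hsq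
    nlinarith
  -- c is monotone on [0, ∞)
  have hcont : ContinuousOn c (Set.Ici (0:ℝ)) := fun t ht =>
    (hderiv t ht).continuousAt.continuousWithinAt
  have hdiff : DifferentiableOn ℝ c (interior (Set.Ici (0:ℝ))) := by
    rw [interior_Ici]
    exact fun t ht => ((hderiv t (le_of_lt ht)).differentiableAt).differentiableWithinAt
  have hmono : MonotoneOn c (Set.Ici (0:ℝ)) := by
    apply monotoneOn_of_deriv_nonneg (convex_Ici 0) hcont hdiff
    intro t ht
    rw [interior_Ici] at ht
    rw [(hderiv t ht.le).deriv]
    positivity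
  -- the shifted function c ∘ max · 0 is monotone on all of ℝ
  have hmono' : Monotone (fun t : ℝ => c (max t 0)) := by
    intro x y hxy
    exact hmono (le_max_right x 0) (le_max_right y 0) (max_le_max hxy le_rfl)
  have hbdd : BddAbove (Set.range fun t : ℝ => c (max t 0)) := by
    refine ⟨1, ?_⟩
    rintro _ ⟨t, rfl⟩
    exact hcle1 _ (le_max_right t 0)
  set L : ℝ := ⨆ t : ℝ, c (max t 0) with hL_def
  have hLtendsto : Tendsto (fun t : ℝ => c (max t 0)) atTop (𝓝 L) :=
    tendsto_atTop_ciSup hmono' hbdd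
  have hctendsto : Tendsto c atTop (𝓝 L) := by
    apply hLtendsto.congr'
    filter_upwards [eventually_ge_atTop (0:ℝ)] with t ht
    rw [max_eq_left ht]
  have hcleL : ∀ t : ℝ, 0 ≤ t → c t ≤ L := by
    intro t ht
    have := le_ciSup hbdd t
    rwa [max_eq_left ht] at this
  have hL1 : L ≤ 1 := ciSup_le fun t => hcle1 _ (le_max_right t 0)
  -- L = 1
  have hLeq : L = 1 := by
    by_contra hne
    have hLlt : L < 1 := lt_of_le_of_ne hL1 hne
    set δ : ℝ := kθ * ((1 - L) * (1 + c 0)) with hδ_def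
    have hδpos : 0 < δ := by
      apply mul_pos hkθ
      apply mul_pos <;> linarith
    -- g t = c t - δ t is monotone on [0, ∞)
    set g : ℝ → ℝ := fun t => c t - δ * t with hg_def
    have hgderiv : ∀ t : ℝ, 0 ≤ t → HasDerivAt g (kθ * s t ^ 2 - δ) t := by
      intro t ht
      have h := (hderiv t ht).sub ((hasDerivAt_id t).const_mul δ)
      simp only [id_eq, mul_one] at h
      exact h
    have hgmono : MonotoneOn g (Set.Ici (0:ℝ)) := by
      apply monotoneOn_of_deriv_nonneg (convex_Ici 0)
      · exact fun t ht => ((hgderiv t ht).continuousAt).continuousWithinAt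
      · rw [interior_Ici]
        exact fun t ht => ((hgderiv t ht.le).differentiableAt).differentiableWithinAt
      · intro t ht
        rw [interior_Ici] at ht
        rw [(hgderiv t ht.le).deriv]
        have h1 : c 0 ≤ c t := hmono (by norm_num) (Set.mem_Ici.2 ht.le) ht.le
        have h2 : c t ≤ L := hcleL t ht.le
        have h3 : s t ^ 2 = 1 - c t ^ 2 := hsc t ht.le
        have h4 : -1 ≤ c 0 := hcge 0 le_rfl
        have h5 : (1 - L) * (1 + c 0) ≤ (1 - c t) * (1 + c t) := by nlinarith
        have : δ ≤ kθ * s t ^ 2 := by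
          rw [h3, hδ_def]
          nlinarith
        linarith
    set T : ℝ := (1 - c 0) / δ + 1 with hT_def
    have hc0le1 : c 0 ≤ 1 := hcle1 0 le_rfl
    have hTpos : 0 ≤ T := by
      have h0 : 0 ≤ (1 - c 0) / δ := div_nonneg (by linarith) hδpos.le
      rw [hT_def]; linarith
    have := hgmono (Set.self_mem_Ici) hTpos hTpos
    have hδT : δ * T = (1 - c 0) + δ := by
      rw [hT_def]; field_simp
    have hcT : c T ≤ 1 := hcle1 T hTpos
    simp only [hg_def] at this
    rw [hδT] at this
    linarith
  rw [hLeq] at hctendsto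
  -- squeeze σ to 0
  have hsqueeze : Tendsto (fun t => Real.sqrt (π ^ 2 / 2 * (1 - c t))) atTop (𝓝 0) := by
    have h1 : Tendsto (fun t => π ^ 2 / 2 * (1 - c t)) atTop (𝓝 (π ^ 2 / 2 * (1 - 1))) :=
      (tendsto_const_nhds.sub hctendsto).const_mul (π ^ 2 / 2)
    have h2 := (Real.continuous_sqrt.tendsto (π ^ 2 / 2 * (1 - 1))).comp h1
    norm_num at h2
    exact h2
  apply squeeze_zero_norm' _ hsqueeze
  filter_upwards [eventually_ge_atTop (0:ℝ)] with t ht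
  have hcos := hccos t ht
  have hσt := (hσ t ht).1
  have habs : |σ t| ≤ π := abs_le.2 ⟨hσt.1.le, hσt.2⟩
  have hb1 : Real.cos (σ t) ≤ 1 - 2 / π ^ 2 * σ t ^ 2 :=
    Real.cos_le_one_sub_mul_cos_sq habs
  have hπ : (0:ℝ) < π := Real.pi_pos
  have hsqle : σ t ^ 2 ≤ π ^ 2 / 2 * (1 - c t) := by
    rw [← hcos]
    have h2 : 2 / π ^ 2 * σ t ^ 2 ≤ 1 - Real.cos (σ t) := by linarith
    calc σ t ^ 2 = π ^ 2 / 2 * (2 / π ^ 2 * σ t ^ 2) := by field_simp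
      _ ≤ π ^ 2 / 2 * (1 - Real.cos (σ t)) := by
          apply mul_le_mul_of_nonneg_left h2 (by positivity)
  calc ‖σ t‖ = Real.sqrt (σ t ^ 2) := by rw [Real.sqrt_sq_eq_abs, Real.norm_eq_abs]
    _ ≤ Real.sqrt (π ^ 2 / 2 * (1 - c t)) := Real.sqrt_le_sqrt hsqle
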